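/- Let θ ∈ (0,1) and θ_n = θ^n/(n+1). For any positive integers R, t and any arithmetic progression s_1 < … < s_R in ℕ, max_{1≤i≤R} θ_{s_i+t}/θ_{s_i} ≤ (2/R) ∑_{i=1}^R θ_{s_i+t}/θ_{s_i}. -/

import Mathlib

/-- Let `θ ∈ (0,1)` and `θ_n = θ^n/(n+1)`.  For any positive
integers `R, t` and any arithmetic progression `s_i = s₀ + i·dstep` (`i < R`),
`max_i θ_{s_i+t}/θ_{s_i} ≤ (2/R) ∑_i θ_{s_i+t}/θ_{s_i}`. -/
theorem stmt6 (θ : ℝ) (h0 : 0 < θ) (h1 : θ < 1)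
    (θn : ℕ → ℝ) (hθn : ∀ n, θn n = θ ^ n / ((n : ℝ) + 1))
    (R t : ℕ) (hR : 0 < R) (ht : 0 < t)
    (s₀ dstep : ℕ) (hs₀ : 1 ≤ s₀) (hd : 0 < dstep) :
    ∀ i < R, θn (s₀ + i * dstep + t) / θn (s₀ + i * dstep) ≤
      (2 / (R : ℝ)) *
        ∑ j ∈ Finset.range R, θn (s₀ + j * dstep + t) / θn (s₀ + j * dstep) := by
  intro i hi
  have ht' : (0:ℝ) < t := by exact_mod_cast ht
  have hd' : (1:ℝ) ≤ dstep := by exact_mod_cast hd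
  have hR1 : (1:ℝ) ≤ R := by exact_mod_cast hR
  have hc0 : (0:ℝ) ≤ s₀ := by positivity
  set A : ℕ → ℝ := fun j => (s₀:ℝ) + j * dstep + 1 with hA
  set B : ℕ → ℝ := fun j => A j + t with hB
  have hApos : ∀ j, 0 < A j := by intro j; simp only [hA]; positivity
  have hBpos : ∀ j, 0 < B j := fun j => by
    have := hApos j; simp only [hB]; linarith
  have hval : ∀ j : ℕ, θn (s₀ + j * dstep + t) / θn (s₀ + j * dstep)
      = θ ^ t * (A j / B j) := by
    intro j
    have h1 : ((s₀ + j * dstep : ℕ) : ℝ) + 1 = A j := by simp [hA]; try push_cast; try ring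
    have h2 : ((s₀ + j * dstep + t : ℕ) : ℝ) + 1 = B j := by
      simp only [hA, hB]; push_cast; try ring
    rw [hθn, hθn, h1, h2, pow_add]
    have hθs : θ ^ (s₀ + j * dstep) ≠ 0 := by positivity
    have := (hApos j).ne'
    have := (hBpos j).ne'
    field_simp
  set M : ℝ := (s₀:ℝ) + ((R:ℝ) - 1) * dstep + 1 with hM
  have hMpos : 0 < M := by have : (0:ℝ) ≤ ((R:ℝ)-1) * dstep := by nlinarith
                           simp only [hM]; linarith
  have hMt : 0 < M + (t:ℝ) := by linarith
  have hAle : ∀ j < R, A j ≤ M := by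
    intro j hj
    have : (j:ℝ) ≤ (R:ℝ) - 1 := by
      have : (j:ℝ) + 1 ≤ R := by exact_mod_cast Nat.succ_le_of_lt hj
      linarith
    simp only [hA, hM]
    nlinarith
  -- Gauss sum
  have hgauss : ∑ j ∈ Finset.range R, (j:ℝ) = (R:ℝ) * ((R:ℝ) - 1) / 2 := by
    have h := Finset.sum_range_id_mul_two R
    have h2 : ((∑ i ∈ Finset.range R, i : ℕ) : ℝ) * 2 = (R:ℝ) * ((R:ℝ) - 1) := by
      rw [← Nat.cast_ofNat, ← Nat.cast_mul, h]
      rw [Nat.cast_mul, Nat.cast_sub hR]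
      push_cast; ring
    push_cast at h2
    linarith
  have hsumA : ∑ j ∈ Finset.range R, A j
      = (R:ℝ) * ((s₀:ℝ) + 1) + (dstep:ℝ) * ((R:ℝ) * ((R:ℝ) - 1) / 2) := by
    simp only [hA]
    rw [Finset.sum_add_distrib, Finset.sum_add_distrib, Finset.sum_const,
      Finset.card_range, ← Finset.sum_mul, hgauss]
    simp [Finset.sum_const, Finset.card_range]
    push_cast; ring
  have hsumge : (R:ℝ) / 2 * M ≤ ∑ j ∈ Finset.range R, A j := by
    rw [hsumA, hM]; nlinarith
  have key : A i / B i ≤ 2 / (R:ℝ) * ∑ j ∈ Finset.range R, A j / B j := by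
    have step1 : A i / B i ≤ M / (M + t) := by
      rw [div_le_div_iff₀ (hBpos i) hMt]
      have hAi := hAle i hi
      simp only [hB]
      nlinarith [hApos i]
    have step2 : ∑ j ∈ Finset.range R, A j / (M + (t:ℝ))
        ≤ ∑ j ∈ Finset.range R, A j / B j := by
      apply Finset.sum_le_sum
      intro j hj
      have hj' : A j ≤ M := hAle j (Finset.mem_range.mp hj)
      have hBj := hBpos j
      rw [div_le_div_iff₀ hMt hBj]
      have := (hApos j).le
      simp only [hB]
      nlinarith
    have step3 : M / (M + t) ≤ 2 / (R:ℝ) * ((∑ j ∈ Finset.range R, A j) / (M + (t:ℝ))) := by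
      have hRpos : (0:ℝ) < R := by linarith
      have h5 : (R:ℝ) / 2 * M / (M + t) ≤ (∑ j ∈ Finset.range R, A j) / (M + (t:ℝ)) := by
        gcongr
      calc M / (M + t) = 2 / (R:ℝ) * ((R:ℝ) / 2 * M / (M + t)) := by
              field_simp
            _ ≤ 2 / (R:ℝ) * ((∑ j ∈ Finset.range R, A j) / (M + (t:ℝ))) := by
              apply mul_le_mul_of_nonneg_left h5 (by positivity)
    calc A i / B i ≤ M / (M + t) := step1
      _ ≤ 2 / (R:ℝ) * ((∑ j ∈ Finset.range R, A j) / (M + (t:ℝ))) := step3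
      _ = 2 / (R:ℝ) * ∑ j ∈ Finset.range R, A j / (M + (t:ℝ)) := by
            rw [Finset.sum_div]
      _ ≤ 2 / (R:ℝ) * ∑ j ∈ Finset.range R, A j / B j := by
            apply mul_le_mul_of_nonneg_left step2 (by positivity)
  simp only [hval]
  rw [← Finset.mul_sum, mul_left_comm]
  exact mul_le_mul_of_nonneg_left key (pow_nonneg h0.le t)
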